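/- Under the mixture observation model, the scatter matrix satisfies λ_min(E_{x∼p}[z(x)_S z(x)_Sᵀ]) ≥ 1−ν; consequently λ_max(E_{x∼p}[z(x)_S z(x)_Sᵀ]) ≥ 1−ν. -/
import Mathlib


/- Common setup: linear influence games (LIGs), the PSNE set, the noisy
observation model, feature vectors, the logistic loss and its gradient,
population/sample Hessian and scatter matrices, and Rayleigh-quotient
encodings of eigenvalue bounds for (symmetric) submatrices.

Joint actions in `{-1,+1}^n` are modeled as `Fin n → Bool` via the sign map
`sgn` (`true ↦ +1`, `false ↦ -1`).  For player `i`, the feature vector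
`z_i(x) = (x_i · x_{-i}, x_i)` and the parameter vector `v_i = (w_{i,-i}, -b_i)`
are indexed by `Fin n`, with the bias coordinate placed at index `i`
(a fixed permutation of the paper's coordinate ordering), so that
`v_i ⬝ᵥ z_i(x) = x_i (∑_{j ≠ i} W i j · x_j - b i)` is player `i`'s payoff. -/

open Matrix Finset

noncomputable section

/-- Sign of a Boolean action: `true ↦ +1`, `false ↦ -1`. -/
def sgn (a : Bool) : ℝ := if a then 1 else -1

/-- Payoff of player `i` at joint action `x` in the LIG `(W, b)`:
`x_i (∑_{j ≠ i} W i j · x_j - b i)`. -/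
def payoff {n : ℕ} (W : Matrix (Fin n) (Fin n) ℝ) (b : Fin n → ℝ)
    (i : Fin n) (x : Fin n → Bool) : ℝ :=
  sgn (x i) * ((∑ j ∈ Finset.univ.erase i, W i j * sgn (x j)) - b i)

/-- The pure-strategy Nash equilibria set `NE(W, b)`. -/
def NEset {n : ℕ} (W : Matrix (Fin n) (Fin n) ℝ) (b : Fin n → ℝ) :
    Finset (Fin n → Bool) :=
  @Finset.filter _ (fun x => ∀ i, 0 ≤ payoff W b i x) (Classical.decPred _)
    Finset.univ

/-- The observation distribution
`p(x) = q·1[x ∈ NE]/|NE| + (1-q)·1[x ∉ NE]/(2^n - |NE|)`. -/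
def pObs {n : ℕ} (q : ℝ) (NE : Finset (Fin n → Bool)) (x : Fin n → Bool) : ℝ :=
  if x ∈ NE then q / (NE.card : ℝ)
  else (1 - q) / ((2 : ℝ) ^ n - (NE.card : ℝ))

/-- The mixture coefficient `ν = (q - c/2^n)/(1 - c/2^n)`, where `c = |NE*|`. -/
def mixCoef (n : ℕ) (q : ℝ) (c : ℕ) : ℝ :=
  (q - (c : ℝ) / (2 : ℝ) ^ n) / (1 - (c : ℝ) / (2 : ℝ) ^ n)

/-- Feature vector `z_i(x) = (x_i·x_{-i}, x_i)` (bias coordinate at index `i`). -/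
def zvec {n : ℕ} (i : Fin n) (x : Fin n → Bool) : Fin n → ℝ :=
  fun j => if j = i then sgn (x i) else sgn (x i) * sgn (x j)

/-- Parameter vector `v_i = (w_{i,-i}, -b_i)` (bias coordinate at index `i`). -/
def vvec {n : ℕ} (W : Matrix (Fin n) (Fin n) ℝ) (b : Fin n → ℝ) (i : Fin n) :
    Fin n → ℝ :=
  fun j => if j = i then -b i else W i j

/-- Support `S = {j : v_j ≠ 0}` of a vector. -/
def supp {n : ℕ} (v : Fin n → ℝ) : Finset (Fin n) :=
  @Finset.filter _ (fun j => v j ≠ 0) (Classical.decPred _) Finset.univ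

/-- `η(s) = 1/(e^{s/2} + e^{-s/2})²`. -/
def eta (s : ℝ) : ℝ := 1 / (Real.exp (s / 2) + Real.exp (-s / 2)) ^ 2

/-- Logistic loss `ℓ_i(v, D) = (1/m) ∑_l log(1 + exp(-vᵀ z_i(x⁽ˡ⁾)))`. -/
def loss {n m : ℕ} (i : Fin n) (v : Fin n → ℝ)
    (D : Fin m → (Fin n → Bool)) : ℝ :=
  (1 / (m : ℝ)) * ∑ l, Real.log (1 + Real.exp (-(v ⬝ᵥ zvec i (D l))))

/-- Gradient of the logistic loss,
`∇ℓ(v, D) = (1/m) ∑_l (-z⁽ˡ⁾)/(1 + exp(vᵀ z⁽ˡ⁾))`. -/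
def gradLoss {n m : ℕ} (i : Fin n) (v : Fin n → ℝ)
    (D : Fin m → (Fin n → Bool)) : Fin n → ℝ :=
  fun j => (1 / (m : ℝ)) *
    ∑ l, -(zvec i (D l) j) / (1 + Real.exp (v ⬝ᵥ zvec i (D l)))

/-- ℓ1 norm `‖v‖₁ = ∑_j |v_j|`. -/
def norm1 {n : ℕ} (v : Fin n → ℝ) : ℝ := ∑ j, |v j|

/-- Quadratic form `yᵀ M y`. -/
def quadForm {n : ℕ} (M : Matrix (Fin n) (Fin n) ℝ) (y : Fin n → ℝ) : ℝ :=
  y ⬝ᵥ M.mulVec y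

/-- `λ_min(M_SS) ≥ c`, encoded via the Rayleigh quotient over vectors
supported on `S` (exactly equivalent for symmetric `M`). -/
def minEigSubGE {n : ℕ} (M : Matrix (Fin n) (Fin n) ℝ) (S : Finset (Fin n))
    (c : ℝ) : Prop :=
  ∀ y : Fin n → ℝ, (∀ j ∉ S, y j = 0) → c * (∑ j, y j ^ 2) ≤ quadForm M y

/-- `λ_min(M_SS) > c` (Rayleigh form; equivalent for symmetric `M` since the
unit sphere of the finite-dimensional subspace is compact). -/
def minEigSubGT {n : ℕ} (M : Matrix (Fin n) (Fin n) ℝ) (S : Finset (Fin n))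
    (c : ℝ) : Prop :=
  ∀ y : Fin n → ℝ, (∀ j ∉ S, y j = 0) → y ≠ 0 →
    c * (∑ j, y j ^ 2) < quadForm M y

/-- `λ_max(M_SS) ≤ c` (Rayleigh form). -/
def maxEigSubLE {n : ℕ} (M : Matrix (Fin n) (Fin n) ℝ) (S : Finset (Fin n))
    (c : ℝ) : Prop :=
  ∀ y : Fin n → ℝ, (∀ j ∉ S, y j = 0) → quadForm M y ≤ c * (∑ j, y j ^ 2)

/-- `λ_max(M_SS) < c` (Rayleigh form). -/
def maxEigSubLT {n : ℕ} (M : Matrix (Fin n) (Fin n) ℝ) (S : Finset (Fin n))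
    (c : ℝ) : Prop :=
  ∀ y : Fin n → ℝ, (∀ j ∉ S, y j = 0) → y ≠ 0 →
    quadForm M y < c * (∑ j, y j ^ 2)

/-- `λ_max(M_SS) ≥ c` (Rayleigh form: some nonzero supported vector attains it). -/
def maxEigSubGE {n : ℕ} (M : Matrix (Fin n) (Fin n) ℝ) (S : Finset (Fin n))
    (c : ℝ) : Prop :=
  ∃ y : Fin n → ℝ, (∀ j ∉ S, y j = 0) ∧ y ≠ 0 ∧
    c * (∑ j, y j ^ 2) ≤ quadForm M y

/-- Population Hessian `H*_i = E_{x∼p}[η(vᵀz_i(x)) z_i(x) z_i(x)ᵀ]`. -/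
def popHess {n : ℕ} (q : ℝ) (NE : Finset (Fin n → Bool)) (i : Fin n)
    (v : Fin n → ℝ) : Matrix (Fin n) (Fin n) ℝ :=
  ∑ x : Fin n → Bool,
    (pObs q NE x * eta (v ⬝ᵥ zvec i x)) • vecMulVec (zvec i x) (zvec i x)

/-- Population scatter matrix `E_{x∼p}[z_i(x) z_i(x)ᵀ]`. -/
def popScatter {n : ℕ} (q : ℝ) (NE : Finset (Fin n → Bool)) (i : Fin n) :
    Matrix (Fin n) (Fin n) ℝ :=
  ∑ x : Fin n → Bool, pObs q NE x • vecMulVec (zvec i x) (zvec i x)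

/-- Sample Hessian `H^m = (1/m) ∑_l η(vᵀz⁽ˡ⁾) z⁽ˡ⁾ (z⁽ˡ⁾)ᵀ`. -/
def sampleHess {n m : ℕ} (i : Fin n) (v : Fin n → ℝ)
    (D : Fin m → (Fin n → Bool)) : Matrix (Fin n) (Fin n) ℝ :=
  (1 / (m : ℝ)) •
    ∑ l, eta (v ⬝ᵥ zvec i (D l)) • vecMulVec (zvec i (D l)) (zvec i (D l))

/-- Sample scatter matrix `(1/m) ∑_l z⁽ˡ⁾ (z⁽ˡ⁾)ᵀ`. -/
def sampleScatter {n m : ℕ} (i : Fin n) (D : Fin m → (Fin n → Bool)) :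
    Matrix (Fin n) (Fin n) ℝ :=
  (1 / (m : ℝ)) • ∑ l, vecMulVec (zvec i (D l)) (zvec i (D l))

/-- Probability of the event `E` under `m` i.i.d. draws from `p`. -/
def iidProb {X : Type*} [Fintype X] (p : X → ℝ) (m : ℕ)
    (E : Set (Fin m → X)) : ℝ :=
  ∑ D : Fin m → X, E.indicator (fun D => ∏ l, p (D l)) D

/-- `ρ` is the minimum payoff over the PSNE set of `(W, b)`. -/
def isMinPayoff {n : ℕ} (W : Matrix (Fin n) (Fin n) ℝ) (b : Fin n → ℝ)
    (ρ : ℝ) : Prop :=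
  IsLeast {r : ℝ | ∃ x ∈ NEset W b, ∃ i, r = payoff W b i x} ρ

lemma sgn_sq (a : Bool) : sgn a * sgn a = 1 := by
  cases a <;> simp [sgn]

lemma sgn_not (a : Bool) : sgn (!a) = -sgn a := by
  cases a <;> simp [sgn]

/-- If `f` is negated by flipping coordinate `a`, its sum vanishes. -/
lemma sum_flip {n : ℕ} (a : Fin n) (f : (Fin n → Bool) → ℝ)
    (hf : ∀ x, f (Function.update x a (!x a)) = - f x) :
    ∑ x : Fin n → Bool, f x = 0 := by
  have hinv : Function.Involutive (fun x : Fin n → Bool => Function.update x a (!x a)) := by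
    intro x
    simp [Function.update_idem]
  let e : (Fin n → Bool) ≃ (Fin n → Bool) :=
    ⟨fun x => Function.update x a (!x a), fun x => Function.update x a (!x a), hinv, hinv⟩
  have h1 : ∑ x : Fin n → Bool, f x = ∑ x : Fin n → Bool, f (e x) :=
    (Equiv.sum_comp e f).symm
  have h2 : ∑ x : Fin n → Bool, f (e x) = -∑ x : Fin n → Bool, f x := by
    rw [← Finset.sum_neg_distrib]
    refine Finset.sum_congr rfl fun x _ => ?_
    exact hf x
  linarith [h1, h2]

lemma zvec_self {n : ℕ} (i : Fin n) (x : Fin n → Bool) :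
    zvec i x i = sgn (x i) := if_pos rfl

lemma zvec_ne {n : ℕ} {i j : Fin n} (h : j ≠ i) (x : Fin n → Bool) :
    zvec i x j = sgn (x i) * sgn (x j) := if_neg h

lemma zvec_orth {n : ℕ} (i j k : Fin n) (hjk : j ≠ k) :
    ∑ x : Fin n → Bool, zvec i x j * zvec i x k = 0 := by
  by_cases hj : j = i
  · subst hj
    have hk : k ≠ j := fun h => hjk h.symm
    apply sum_flip k
    intro x
    rw [zvec_self, zvec_self, zvec_ne hk, zvec_ne hk,
      Function.update_of_ne (fun h : j = k => hjk h), Function.update_self, sgn_not]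
    ring
  · by_cases hk : k = i
    · subst hk
      apply sum_flip j
      intro x
      rw [zvec_self, zvec_self, zvec_ne hj, zvec_ne hj,
        Function.update_of_ne (fun h : k = j => hjk h.symm), Function.update_self, sgn_not]
      ring
    · apply sum_flip j
      intro x
      have hij : i ≠ j := fun h => hj h.symm
      have hkj : k ≠ j := fun h => hjk h.symm
      rw [zvec_ne hj, zvec_ne hj, zvec_ne hk, zvec_ne hk,
        Function.update_of_ne hij, Function.update_of_ne hkj, Function.update_self, sgn_not]
      ring

lemma zvec_sq {n : ℕ} (i j : Fin n) (x : Fin n → Bool) :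
    zvec i x j * zvec i x j = 1 := by
  unfold zvec
  split <;> [exact sgn_sq _;
    (rw [show sgn (x i) * sgn (x j) * (sgn (x i) * sgn (x j))
        = (sgn (x i) * sgn (x i)) * (sgn (x j) * sgn (x j)) from by ring,
      sgn_sq, sgn_sq]; norm_num)]

lemma card_pow {n : ℕ} : (Fintype.card (Fin n → Bool) : ℝ) = (2 : ℝ) ^ n := by
  simp [Fintype.card_fun]

lemma sum_dot_sq {n : ℕ} (i : Fin n) (y : Fin n → ℝ) :
    ∑ x : Fin n → Bool, (∑ j, y j * zvec i x j) ^ 2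
      = (2 : ℝ) ^ n * ∑ j, y j ^ 2 := by
  have h : ∀ x : Fin n → Bool, (∑ j, y j * zvec i x j) ^ 2
      = ∑ j, ∑ k, (y j * y k) * (zvec i x j * zvec i x k) := by
    intro x
    rw [sq, Finset.sum_mul_sum]
    refine Finset.sum_congr rfl fun j _ => Finset.sum_congr rfl fun k _ => by ring
  simp_rw [h]
  rw [Finset.sum_comm]
  have h2 : ∀ j : Fin n, ∑ x : Fin n → Bool, ∑ k, (y j * y k) * (zvec i x j * zvec i x k)
      = (2 : ℝ) ^ n * y j ^ 2 := by
    intro j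
    rw [Finset.sum_comm]
    have h3 : ∀ k : Fin n, ∑ x : Fin n → Bool, (y j * y k) * (zvec i x j * zvec i x k)
        = if k = j then (2 : ℝ) ^ n * y j ^ 2 else 0 := by
      intro k
      by_cases hk : k = j
      · rw [if_pos hk]
        subst hk
        have hxx : ∀ x : Fin n → Bool, (y k * y k) * (zvec i x k * zvec i x k) = y k ^ 2 := by
          intro x; rw [zvec_sq]; ring
        simp_rw [hxx]
        rw [Finset.sum_const, Finset.card_univ, nsmul_eq_mul, card_pow]
      · rw [if_neg hk]
        rw [← Finset.mul_sum, zvec_orth i j k (fun h => hk h.symm), mul_zero]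
    calc ∑ k : Fin n, ∑ x : Fin n → Bool, (y j * y k) * (zvec i x j * zvec i x k)
        = ∑ k : Fin n, if k = j then (2 : ℝ) ^ n * y j ^ 2 else 0 :=
          Finset.sum_congr rfl fun k _ => h3 k
      _ = (2 : ℝ) ^ n * y j ^ 2 := by simp
  simp_rw [h2]
  rw [← Finset.mul_sum]

lemma quadForm_scatter {n : ℕ} (q : ℝ) (NE : Finset (Fin n → Bool)) (i : Fin n)
    (y : Fin n → ℝ) :
    quadForm (popScatter q NE i) y
      = ∑ x : Fin n → Bool, pObs q NE x * (∑ j, y j * zvec i x j) ^ 2 := by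
  unfold quadForm popScatter
  simp only [Matrix.mulVec, dotProduct, Matrix.sum_apply, Matrix.smul_apply,
    vecMulVec_apply, smul_eq_mul, Finset.sum_mul, Finset.mul_sum]
  rw [show (∑ a : Fin n, ∑ b : Fin n, ∑ x : Fin n → Bool,
      y a * (pObs q NE x * (zvec i x a * zvec i x b) * y b))
      = ∑ a : Fin n, ∑ x : Fin n → Bool, ∑ b : Fin n,
      y a * (pObs q NE x * (zvec i x a * zvec i x b) * y b) from
    Finset.sum_congr rfl fun a _ => Finset.sum_comm, Finset.sum_comm]
  refine Finset.sum_congr rfl fun x _ => ?_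
  rw [sq, Finset.sum_mul_sum, Finset.mul_sum]
  refine Finset.sum_congr rfl fun a _ => ?_
  rw [Finset.mul_sum]
  refine Finset.sum_congr rfl fun b _ => by ring

/-- under the mixture observation model,
`λ_min(E_{x∼p}[z_S z_Sᵀ]) ≥ 1-ν`, and consequently
`λ_max(E_{x∼p}[z_S z_Sᵀ]) ≥ 1-ν`.  (The nonemptiness of `S` is presupposed by
the statement, which speaks of eigenvalues of the `S × S` scatter matrix.) -/
theorem population_scatter_min_eig
    (n : ℕ) (W : Matrix (Fin n) (Fin n) ℝ) (b : Fin n → ℝ)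
    (hdiag : ∀ i, W i i = 0) (q : ℝ)
    (hNE1 : 1 ≤ (NEset W b).card) (hNE2 : (NEset W b).card < 2 ^ n)
    (hq1 : ((NEset W b).card : ℝ) / (2 : ℝ) ^ n < q) (hq2 : q < 1)
    (i : Fin n) (hS : (supp (vvec W b i)).Nonempty) :
    minEigSubGE (popScatter q (NEset W b) i) (supp (vvec W b i))
        (1 - mixCoef n q (NEset W b).card) ∧
      maxEigSubGE (popScatter q (NEset W b) i) (supp (vvec W b i))
        (1 - mixCoef n q (NEset W b).card) := by
  set NE := NEset W b
  set c : ℝ := ((NEset W b).card : ℝ) with hc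
  have h2n : (0 : ℝ) < (2 : ℝ) ^ n := by positivity
  have hc1 : (1 : ℝ) ≤ c := by rw [hc]; exact_mod_cast hNE1
  have hc2 : c < (2 : ℝ) ^ n := by
    rw [hc]
    exact_mod_cast hNE2
  have hd : (0 : ℝ) < (2 : ℝ) ^ n - c := by linarith
  have hq0 : (0 : ℝ) < 1 - q := by linarith
  set t : ℝ := (1 - q) / ((2 : ℝ) ^ n - c) with ht
  have ht0 : 0 < t := div_pos hq0 hd
  have hmix : 1 - mixCoef n q (NEset W b).card = t * (2 : ℝ) ^ n := by
    rw [mixCoef, ht, ← hc]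
    have h1 : 1 - c / (2 : ℝ) ^ n ≠ 0 := by
      intro h
      have : c = (2 : ℝ) ^ n := by field_simp at h; linarith
      linarith
    field_simp
    ring
  have hplb : ∀ x : Fin n → Bool, t ≤ pObs q NE x := by
    intro x
    unfold pObs
    split
    · -- x ∈ NE : t = (1-q)/(2^n - c) ≤ q / c
      have hcpos : (0 : ℝ) < c := by linarith
      have hq2n : c < q * (2 : ℝ) ^ n := by
        have := (div_lt_iff₀ h2n).mp hq1
        linarith
      rw [ht, div_le_div_iff₀ hd hcpos]
      nlinarith
    · exact le_of_eq rfl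
  have key : ∀ y : Fin n → ℝ,
      (1 - mixCoef n q (NEset W b).card) * (∑ j, y j ^ 2)
        ≤ quadForm (popScatter q NE i) y := by
    intro y
    rw [quadForm_scatter, hmix]
    have hsum : ∑ x : Fin n → Bool, t * (∑ j, y j * zvec i x j) ^ 2
        = t * (2 : ℝ) ^ n * ∑ j, y j ^ 2 := by
      rw [← Finset.mul_sum, sum_dot_sq, mul_assoc]
    calc t * (2 : ℝ) ^ n * ∑ j, y j ^ 2
        = ∑ x : Fin n → Bool, t * (∑ j, y j * zvec i x j) ^ 2 := hsum.symm
      _ ≤ ∑ x : Fin n → Bool, pObs q NE x * (∑ j, y j * zvec i x j) ^ 2 := by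
          refine Finset.sum_le_sum fun x _ => ?_
          exact mul_le_mul_of_nonneg_right (hplb x) (sq_nonneg _)
  constructor
  · intro y _
    exact key y
  · obtain ⟨j0, hj0⟩ := hS
    refine ⟨fun j => if j = j0 then 1 else 0, fun j hj => ?_, ?_, ?_⟩
    · have : j ≠ j0 := fun h => hj (h ▸ hj0)
      simp [this]
    · intro h
      have := congrFun h j0
      simp at this
    · exact key _
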